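/- The Somos-4 sequence satisfies the fifth-order recurrence a_n a_{n-5} = 5 a_{n-3} a_{n-2} − a_{n-4} a_{n-1} for all n (with the sequence extended to all integers by a_n = a_{3-n}). -/

import Mathlib

/-- The Somos-4 sequence (extended to all integers, palindromic about 3/2)
satisfies the fifth-order recurrence `a n * a (n-5) = 5 a(n-3) a(n-2) - a(n-4) a(n-1)`. -/
theorem somos4_fifth_order (a : ℤ → ℤ)
    (h0 : a 0 = 1) (h1 : a 1 = 1) (h2 : a 2 = 1) (h3 : a 3 = 1)
    (hrec : ∀ n : ℤ, a n * a (n + 4) = a (n + 1) * a (n + 3) + a (n + 2) ^ 2)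
    (hpal : ∀ n : ℤ, a n = a (3 - n)) :
    ∀ n : ℤ, a n * a (n - 5) = 5 * a (n - 3) * a (n - 2) - a (n - 4) * a (n - 1) := by
  -- positivity on naturals
  have key : ∀ k : ℕ, 0 < a k ∧ 0 < a (k + 1) ∧ 0 < a (k + 2) ∧ 0 < a (k + 3) := by
    intro k
    induction k with
    | zero => simp [h0, h1, h2, h3]
    | succ k ih =>
      obtain ⟨p0, p1, p2, p3⟩ := ih
      have hr := hrec k
      have h4 : 0 < a ((k : ℤ) + 4) := by
        by_contra h
        push_neg at h
        nlinarith
      push_cast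
      refine ⟨p1, ?_, ?_, ?_⟩
      · rwa [show (k : ℤ) + 1 + 1 = (k : ℤ) + 2 by ring]
      · rwa [show (k : ℤ) + 1 + 2 = (k : ℤ) + 3 by ring]
      · rwa [show (k : ℤ) + 1 + 3 = (k : ℤ) + 4 by ring]
  have hpos : ∀ n : ℤ, 0 < a n := by
    intro n
    rcases le_or_gt 0 n with h | h
    · have := (key n.toNat).1
      rwa [Int.toNat_of_nonneg h] at this
    · rw [hpal n]
      have h3n : 0 ≤ 3 - n := by omega
      have := (key (3 - n).toNat).1
      rwa [Int.toNat_of_nonneg h3n] at this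
  -- the key identity between consecutive values of d
  have step : ∀ n : ℤ,
      a (n + 2) * (a (n + 1) * a (n + 6) + a (n + 2) * a (n + 5) - 5 * a (n + 3) * a (n + 4))
        = a (n + 4) * (a n * a (n + 5) + a (n + 1) * a (n + 4) - 5 * a (n + 2) * a (n + 3)) := by
    intro n
    have hA := hrec n
    have hB := hrec (n + 2)
    have e1 : n + 2 + 4 = n + 6 := by ring
    have e2 : n + 2 + 1 = n + 3 := by ring
    have e3 : n + 2 + 3 = n + 5 := by ring
    have e4 : n + 2 + 2 = n + 4 := by ring
    rw [e1, e2, e3, e4] at hB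
    linear_combination a (n + 1) * hB - a (n + 5) * hA
  -- d vanishes everywhere
  have a4 : a 4 = 2 := by have := hrec 0; norm_num [h0, h1, h2, h3] at this; omega
  have a5 : a 5 = 3 := by
    have := hrec 1; norm_num [h1, h2, h3, a4] at this; omega
  have d0 : a 0 * a 5 + a 1 * a 4 - 5 * a 2 * a 3 = 0 := by
    rw [h0, h1, h2, h3, a4, a5]; ring
  have dzero : ∀ n : ℤ,
      a n * a (n + 5) + a (n + 1) * a (n + 4) - 5 * a (n + 2) * a (n + 3) = 0 := by
    intro n
    induction n using Int.induction_on with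
    | zero => simpa using d0
    | succ k ih =>
      have hs := step k
      rw [ih, mul_zero] at hs
      have h2 := hpos ((k : ℤ) + 2)
      have := mul_eq_zero.mp hs
      rcases this with h | h
      · exact absurd h (ne_of_gt h2)
      · convert h using 3 <;> push_cast <;> ring
    | pred k ih =>
      have hs := step (-(k : ℤ) - 1)
      have e : ∀ m : ℤ, -(k : ℤ) - 1 + m = -(k : ℤ) + (m - 1) := by intro m; ring
      rw [show -(k : ℤ) - 1 + 1 = -(k : ℤ) by ring,
          show -(k : ℤ) - 1 + 2 = -(k : ℤ) + 1 by ring,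
          show -(k : ℤ) - 1 + 6 = -(k : ℤ) + 5 by ring,
          show -(k : ℤ) - 1 + 5 = -(k : ℤ) + 4 by ring,
          show -(k : ℤ) - 1 + 3 = -(k : ℤ) + 2 by ring,
          show -(k : ℤ) - 1 + 4 = -(k : ℤ) + 3 by ring] at hs
      have ih' : a (-(k:ℤ)) * a (-(k:ℤ) + 5) + a (-(k:ℤ) + 1) * a (-(k:ℤ) + 4)
          - 5 * a (-(k:ℤ) + 2) * a (-(k:ℤ) + 3) = 0 := by
        convert ih using 3 <;> push_cast <;> ring
      rw [ih', mul_zero] at hs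
      have h3' := hpos (-(k : ℤ) + 3)
      rcases mul_eq_zero.mp hs.symm with h | h
      · exact absurd h (ne_of_gt h3')
      · convert h using 3 <;> push_cast <;> ring
  intro n
  have := dzero (n - 5)
  rw [show n - 5 + 5 = n by ring, show n - 5 + 1 = n - 4 by ring,
      show n - 5 + 4 = n - 1 by ring, show n - 5 + 2 = n - 3 by ring,
      show n - 5 + 3 = n - 2 by ring] at this
  linarith [this]
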